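/- Let n ≥ 2 and k ≥ 1 be integers with k dividing n, and set m = n/k. For the cluster C = { (i−1)·m + 1 : i = 1,…,k } consisting of the smallest position of each of the k consecutive blocks of m positions, EMD(C) = (n−k) / (2·(n−1)·k); i.e., the upper bound (n−k)/(2(n−1)k) for clusters containing one record per block is attained by the cluster of block minima. -/

import Mathlib

/-- The Earth Mover's Distance (with the ordered distance) between the uniform
distribution on a cluster `C ⊆ {1,…,n}` of `k` records and the uniform
distribution on the whole data set `{1,…,n}`. -/
noncomputable def EMD (n k : ℕ) (C : Finset ℕ) : ℝ :=
  (1 / ((n : ℝ) - 1)) * ∑ i ∈ Finset.Icc 1 n,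
    |∑ j ∈ Finset.Icc 1 i, ((if j ∈ C then (1 : ℝ) / k else 0) - 1 / n)|

/-- If `k ∣ n` and `m = n/k`, the cluster consisting of the smallest position
`(i−1)m+1` of each of the `k` consecutive blocks of `m` positions attains the
upper bound: its EMD equals `(n−k)/(2(n−1)k)`. -/
theorem emd_upper_bound_attained_minima (n k m : ℕ) (hn : 2 ≤ n) (hk : 1 ≤ k)
    (hdvd : k ∣ n) (hm : m = n / k)
    (C : Finset ℕ)
    (hC : C = (Finset.Icc 1 k).image (fun i => (i - 1) * m + 1)) :
    EMD n k C = ((n : ℝ) - k) / (2 * ((n : ℝ) - 1) * k) := by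
  have hk0 : 0 < k := hk
  have hkm : k * m = n := by rw [hm]; exact Nat.mul_div_cancel' hdvd
  have hm0 : 0 < m := by
    rcases Nat.eq_zero_or_pos m with h | h
    · subst h; simp at hkm; omega
    · exact h
  have hkR : (k : ℝ) ≠ 0 := Nat.cast_ne_zero.mpr (by omega)
  have hmR : (m : ℝ) ≠ 0 := Nat.cast_ne_zero.mpr (by omega)
  have hnR : (n : ℝ) = (k : ℝ) * m := by exact_mod_cast hkm.symm
  have hn1 : (n : ℝ) - 1 ≠ 0 := by
    have : (2 : ℝ) ≤ n := by exact_mod_cast hn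
    linarith
  -- counting elements of C up to a*m+b+1
  have hcard : ∀ a b : ℕ, a < k → b < m →
      ((Finset.Icc 1 (a * m + b + 1)).filter (· ∈ C)).card = a + 1 := by
    intro a b ha hb
    have hset : (Finset.Icc 1 (a * m + b + 1)).filter (· ∈ C)
        = (Finset.Icc 1 (a + 1)).image (fun x => (x - 1) * m + 1) := by
      ext j
      simp only [Finset.mem_filter, Finset.mem_Icc, hC, Finset.mem_image]
      constructor
      · rintro ⟨⟨h1, h2⟩, x, ⟨hx1, hx2⟩, rfl⟩
        refine ⟨x, ⟨hx1, ?_⟩, rfl⟩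
        by_contra hcon
        push_neg at hcon
        have hle : (a + 1) * m ≤ (x - 1) * m := Nat.mul_le_mul_right m (by omega)
        rw [add_mul, one_mul] at hle
        omega
      · rintro ⟨x, ⟨hx1, hx2⟩, rfl⟩
        have hxm : (x - 1) * m ≤ a * m := Nat.mul_le_mul_right m (by omega)
        exact ⟨⟨by omega, by omega⟩, x, ⟨hx1, by omega⟩, rfl⟩
    have hinj : Set.InjOn (fun x => (x - 1) * m + 1) (Finset.Icc 1 (a + 1)) := by
      intro x hx y hy hxy
      simp only [Finset.coe_Icc, Set.mem_Icc] at hx hy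
      simp only at hxy
      have := Nat.eq_of_mul_eq_mul_right hm0 (by omega : (x - 1) * m = (y - 1) * m)
      omega
    rw [hset, Finset.card_image_of_injOn hinj, Nat.card_Icc]
    omega
  -- value of each summand
  have hval : ∀ a b : ℕ, a < k → b < m →
      |∑ j ∈ Finset.Icc 1 (a * m + b + 1), ((if j ∈ C then (1 : ℝ) / k else 0) - 1 / n)|
        = ((m : ℝ) - 1 - b) / (k * m) := by
    intro a b ha hb
    rw [Finset.sum_sub_distrib]
    have h1 : ∑ j ∈ Finset.Icc 1 (a * m + b + 1), (if j ∈ C then (1 : ℝ) / k else 0)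
        = ((a : ℝ) + 1) / k := by
      rw [← Finset.sum_filter, Finset.sum_const, hcard a b ha hb, nsmul_eq_mul]
      push_cast
      ring
    have h2 : ∑ _j ∈ Finset.Icc 1 (a * m + b + 1), (1 / (n : ℝ))
        = ((a : ℝ) * m + b + 1) / n := by
      rw [Finset.sum_const, Nat.card_Icc, nsmul_eq_mul]
      have : a * m + b + 1 + 1 - 1 = a * m + b + 1 := by omega
      rw [this]
      push_cast
      ring
    rw [h1, h2]
    have heq : ((a : ℝ) + 1) / k - ((a : ℝ) * m + b + 1) / n = ((m : ℝ) - 1 - b) / (k * m) := by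
      rw [hnR]; field_simp; ring
    rw [heq, abs_of_nonneg]
    apply div_nonneg
    · have : (b : ℝ) + 1 ≤ m := by exact_mod_cast hb
      linarith
    · positivity
  -- reindex the outer sum over blocks
  have hre : ∑ i ∈ Finset.Icc 1 n,
      |∑ j ∈ Finset.Icc 1 i, ((if j ∈ C then (1 : ℝ) / k else 0) - 1 / n)|
      = ∑ p ∈ Finset.range k ×ˢ Finset.range m, ((m : ℝ) - 1 - p.2) / (k * m) := by
    refine Finset.sum_nbij' (fun i => ((i - 1) / m, (i - 1) % m))
      (fun p => p.1 * m + p.2 + 1) ?_ ?_ ?_ ?_ ?_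
    · intro i hi
      simp only [Finset.mem_Icc] at hi
      simp only [Finset.mem_product, Finset.mem_range]
      constructor
      · rw [Nat.div_lt_iff_lt_mul hm0]
        have : i - 1 < n := by omega
        rw [← hkm] at this
        calc i - 1 < k * m := this
          _ = k * m := rfl
      · exact Nat.mod_lt _ hm0
    · rintro ⟨a, b⟩ hp
      simp only [Finset.mem_product, Finset.mem_range] at hp
      simp only [Finset.mem_Icc]
      have h2 : (a + 1) * m ≤ k * m := Nat.mul_le_mul_right m (by omega)
      rw [add_mul, one_mul] at h2
      omega
    · intro i hi
      simp only [Finset.mem_Icc] at hi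
      show (i - 1) / m * m + (i - 1) % m + 1 = i
      have h := Nat.div_add_mod' (i - 1) m
      omega
    · rintro ⟨a, b⟩ hp
      simp only [Finset.mem_product, Finset.mem_range] at hp
      have h1 : a * m + b + 1 - 1 = b + a * m := by omega
      have hdiv : (b + a * m) / m = a := by
        rw [Nat.add_mul_div_right _ _ hm0, Nat.div_eq_of_lt hp.2]; omega
      have hmod : (b + a * m) % m = b := by
        rw [Nat.add_mul_mod_self_right, Nat.mod_eq_of_lt hp.2]
      simp [h1, hdiv, hmod]
    · intro i hi
      simp only [Finset.mem_Icc] at hi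
      obtain ⟨a, b, ha, hb, rfl⟩ : ∃ a b, a < k ∧ b < m ∧ i = a * m + b + 1 := by
        refine ⟨(i - 1) / m, (i - 1) % m, ?_, Nat.mod_lt _ hm0, ?_⟩
        · rw [Nat.div_lt_iff_lt_mul hm0]
          omega
        · have h := Nat.div_add_mod' (i - 1) m
          omega
      have h1 : a * m + b + 1 - 1 = b + a * m := by omega
      have hdiv : (b + a * m) / m = a := by
        rw [Nat.add_mul_div_right _ _ hm0, Nat.div_eq_of_lt hb]; omega
      have hmod : (b + a * m) % m = b := by
        rw [Nat.add_mul_mod_self_right, Nat.mod_eq_of_lt hb]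
      rw [hval a b ha hb]
      simp [h1, hdiv, hmod]
  -- Gauss sum
  have hgauss : ∑ b ∈ Finset.range m, (b : ℝ) = m * ((m : ℝ) - 1) / 2 := by
    have h2 := Finset.sum_range_id_mul_two m
    have h3 : ((∑ i ∈ Finset.range m, i : ℕ) : ℝ) * 2 = (m : ℝ) * ((m : ℝ) - 1) := by
      rw [← Nat.cast_ofNat, ← Nat.cast_mul, h2]
      push_cast [Nat.cast_sub hm0]
      ring
    push_cast at h3
    linarith
  have hinner : ∑ b ∈ Finset.range m, ((m : ℝ) - 1 - b) / (k * m)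
      = (m : ℝ) * ((m : ℝ) - 1) / (2 * k * m) := by
    rw [← Finset.sum_div, Finset.sum_sub_distrib, Finset.sum_const, Finset.card_range,
      nsmul_eq_mul, hgauss]
    field_simp
    ring
  have hsum : ∑ p ∈ Finset.range k ×ˢ Finset.range m, ((m : ℝ) - 1 - p.2) / (k * m)
      = ((m : ℝ) - 1) / 2 := by
    rw [Finset.sum_product]
    simp only [hinner]
    rw [Finset.sum_const, Finset.card_range, nsmul_eq_mul]
    field_simp
  unfold EMD
  rw [hre, hsum, hnR]
  have h1 : (k : ℝ) * m - 1 ≠ 0 := by rw [← hnR]; exact hn1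
  field_simp
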